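/- Let f ∈ ℝ and define J(z,w) := w₁² + 2f·z₁². Then: (i) J(z(t),z'(t)) is constant along every solution of the Hooke equation z'' = −2f·z; (ii) for any c ∈ ℝ, if z lies on the vertical line {z₁ = c} and w' := (−w₁, w₂) is the elastic reflection of w at this line, then J(z,w') = J(z,w); (iii) for any c ∈ ℝ, if z lies on the horizontal line {z₂ = c} and w' := (w₁, −w₂) is the elastic reflection of w at this line, then J(z,w') = J(z,w). Hence J is a first integral of the Hooke billiard with any combination of horizontal and vertical lines as reflection wall. -/

import Mathlib

/-- The first integral `J(z,w) = w₁² + 2f·z₁²` of the Hooke billiard with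
horizontal/vertical line walls. -/
def hookeJ (f : ℝ) (z w : ℝ × ℝ) : ℝ :=
  w.1 ^ 2 + 2 * f * z.1 ^ 2

/-- `J(z,w) = w₁² + 2f·z₁²` is a first integral of the Hooke billiard with any
combination of horizontal and vertical lines as reflection wall: it is constant
along solutions of `z'' = −2f·z` and invariant under elastic reflections at any
vertical line `{z₁ = c}` and any horizontal line `{z₂ = c}`. -/
theorem stmt_6 (f : ℝ) :
    (∀ I : Set ℝ, Convex ℝ I → ∀ z v : ℝ → ℝ × ℝ,
      (∀ t ∈ I, HasDerivWithinAt z (v t) I t) →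
      (∀ t ∈ I, HasDerivWithinAt v ((-(2 * f)) • z t) I t) →
      ∀ t ∈ I, ∀ t' ∈ I, hookeJ f (z t) (v t) = hookeJ f (z t') (v t')) ∧
    (∀ c : ℝ, ∀ z w : ℝ × ℝ, z.1 = c →
      hookeJ f z (-w.1, w.2) = hookeJ f z w) ∧
    (∀ c : ℝ, ∀ z w : ℝ × ℝ, z.2 = c →
      hookeJ f z (w.1, -w.2) = hookeJ f z w) := by
  refine ⟨?_, ?_, ?_⟩
  · intro I hI z v hz hv t ht t' ht'
    have key : ∀ s ∈ I, HasDerivWithinAt (fun u => hookeJ f (z u) (v u))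
        ((0 : ℝ)) I s := by
      intro s hs
      have hz1 : HasDerivWithinAt (fun u => (z u).1) ((v s).1) I s := (hz s hs).fst
      have hv1 : HasDerivWithinAt (fun u => (v u).1) ((-(2 * f)) * (z s).1) I s := by
        have h : HasDerivWithinAt (fun u => (v u).1) ((-(2 * f) • z s).1) I s := (hv s hs).fst
        rwa [Prod.smul_fst, smul_eq_mul] at h
      have h1 : HasDerivWithinAt (fun u => (v u).1 ^ 2)
          (2 * (v s).1 ^ 1 * ((-(2 * f)) * (z s).1)) I s := hv1.pow 2
      have h2 : HasDerivWithinAt (fun u => 2 * f * (z u).1 ^ 2)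
          (2 * f * (2 * (z s).1 ^ 1 * (v s).1)) I s := (hz1.pow 2).const_mul (2 * f)
      have := h1.add h2
      exact this.congr_deriv (by ring)
    have bound : ∀ s ∈ I, ‖(fun _ : ℝ => (0 : ℝ)) s‖ ≤ (0 : ℝ) := by
      intro s _; simp
    have := Convex.norm_image_sub_le_of_norm_hasDerivWithin_le
      (f := fun u => hookeJ f (z u) (v u)) (f' := fun _ => (0 : ℝ)) key bound hI ht' ht
    have h0 : ‖hookeJ f (z t) (v t) - hookeJ f (z t') (v t')‖ ≤ 0 := by simpa using this
    have := norm_le_zero_iff.mp h0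
    linarith [sub_eq_zero.mp this]
  · intro c z w _; simp [hookeJ]
  · intro c z w _; simp [hookeJ]
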